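/- Euclid's fifth postulate (the paper's points-only formulation) holds in planes over ordered fields: let K be a linearly ordered field and V a K-vector space. Suppose t = midpoint K p q = midpoint K s r, the points p, q, s are not collinear over K, and Sbtw K q a r. Then there exists a point e with Sbtw K p a e and Sbtw K s q e. -/

import Mathlib

/-- Euclid's fifth postulate (points-only formulation) holds in planes over ordered
fields. -/
theorem euclid5 {K : Type*} [Field K] [LinearOrder K] [IsStrictOrderedRing K] {V : Type*} [AddCommGroup V]
    [Module K V] {p q r s t a : V}
    (ht1 : t = midpoint K p q) (ht2 : t = midpoint K s r)
    (hnc : ¬ Collinear K ({p, q, s} : Set V))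
    (ha : Sbtw K q a r) :
    ∃ e : V, Sbtw K p a e ∧ Sbtw K s q e := by
  have hr : r = p + q - s := by
    have h : midpoint K p q = midpoint K s r := ht1 ▸ ht2
    rw [midpoint_eq_smul_add, midpoint_eq_smul_add] at h
    have h2 := congrArg (fun x => (2 : K) • x) h
    simp only [smul_smul] at h2
    norm_num at h2
    rw [h2]; abel
  have haux : ∀ c : K, q - p = c • (s - p) → False := by
    intro c hc
    apply hnc
    rw [collinear_iff_of_mem (Set.mem_insert p _)]
    refine ⟨s - p, fun x hx => ?_⟩
    rcases hx with rfl | rfl | rfl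
    · exact ⟨0, by simp⟩
    · exact ⟨c, by rw [← hc]; simp⟩
    · exact ⟨1, by simp⟩
  obtain ⟨u, hu, hae⟩ := ha.mem_image_Ioo
  have hu1 : (1 : K) - u ≠ 0 := by have := hu.2; intro h; linarith
  have hav : a = u • (r - q) + q := by
    rw [← hae]; simp [AffineMap.lineMap_apply_module']
  set e : V := (1 - u)⁻¹ • (a - p) + p with he
  have hap : a - p = (q - p) - u • (s - p) := by
    rw [hav, hr]; module
  have h1 : a = AffineMap.lineMap p e (1 - u) := by
    rw [AffineMap.lineMap_apply_module', he, add_sub_cancel_right, smul_smul,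
      mul_inv_cancel₀ hu1, one_smul]
    abel
  have hes : (1 - u) • (e - s) = q - s := by
    rw [he, add_sub_assoc, smul_add, smul_smul, mul_inv_cancel₀ hu1, one_smul, hap]
    module
  have h2 : q = AffineMap.lineMap s e (1 - u) := by
    rw [AffineMap.lineMap_apply_module', hes]; abel
  have hpe : p ≠ e := by
    intro h
    have h0 : (1 - u)⁻¹ • (a - p) = 0 := by
      have := congrArg (fun x => x - p) h
      simpa [he] using this.symm
    have : a - p = 0 := by
      have := congrArg (fun x => (1 - u) • x) h0
      simpa [smul_smul, mul_inv_cancel₀ hu1] using this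
    rw [hap, sub_eq_zero] at this
    exact haux u this
  have hse : s ≠ e := by
    intro h
    rw [← h] at hes
    simp at hes
    have hqs : q = s := by rw [← sub_eq_zero]; exact hes.symm
    exact haux 1 (by rw [one_smul, hqs])
  refine ⟨e, ?_, ?_⟩
  · rw [h1]
    exact sbtw_lineMap_iff.2 ⟨hpe, ⟨by linarith [hu.2], by linarith [hu.1]⟩⟩
  · rw [h2]
    exact sbtw_lineMap_iff.2 ⟨hse, ⟨by linarith [hu.2], by linarith [hu.1]⟩⟩
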